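/- arXiv:1709.02451 — 2 statements merged into one kernel-verified Lean document; each statement's English description precedes it below -/
import Mathlib

section
/- Assume $x \in X_u$ (so $u(x) = \sum_{n\ge 0}\lambda^{n+1}(x)f(T^nx)$ converges and $\lambda^n(x)\to\infty^{-1}$, i.e. $\lambda^n(x) \to 0$) and let $t > u(x)$ with $\delta := t - u(x) > 0$. Then for all sufficiently large $n$, $\lambda^n(x)^{-1}\delta \le g_x^n(t) \le 2\lambda^n(x)^{-1}\delta$, where $g_x^n(t) = \lambda^n(x)^{-1}(t - S_{n,\lambda}f(x))$ and $S_{n,\lambda}f(x) = \sum_{j=0}^{n-1}\lambda^{j+1}(x)f(T^jx)$. Consequently, if additionally $\frac1n\log\lambda^n(x) \to \int\log\lambda\,d\mu$, then $\frac1n \log g_x^n(t) \to -\int\log\lambda\,d\mu$. -/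
open Filter Real

theorem stmt_14 {X : Type*} (T : X → X) (lam f : X → ℝ)
    (hlampos : ∀ x, 0 < lam x) (hfpos : ∀ x, 0 < f x)
    (Lam : ℕ → X → ℝ)
    (hLam : ∀ n x, Lam n x = ∏ j ∈ Finset.range n, lam (T^[j] x))
    (x : X)
    (hsum : Summable (fun n : ℕ => Lam (n + 1) x * f (T^[n] x)))
    (hdecay : Tendsto (fun n => Lam n x) atTop (nhds 0))
    (u t δ : ℝ) (hu : u = ∑' n : ℕ, Lam (n + 1) x * f (T^[n] x))
    (ht : u < t) (hδ : δ = t - u)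
    (g : ℕ → ℝ → ℝ)
    (hg : ∀ n s, g n s = (Lam n x)⁻¹ *
      (s - ∑ j ∈ Finset.range n, Lam (j + 1) x * f (T^[j] x))) :
    (∀ᶠ n in atTop, (Lam n x)⁻¹ * δ ≤ g n t ∧ g n t ≤ 2 * (Lam n x)⁻¹ * δ) ∧
    (∀ L : ℝ, Tendsto (fun n : ℕ => (1 / (n:ℝ)) * Real.log (Lam n x)) atTop (nhds L) →
      Tendsto (fun n : ℕ => (1 / (n:ℝ)) * Real.log (g n t)) atTop (nhds (-L))) := by
  have hLampos : ∀ n, 0 < Lam n x := by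
    intro n; rw [hLam]; exact Finset.prod_pos fun j _ => hlampos _
  set S : ℕ → ℝ := fun n => ∑ j ∈ Finset.range n, Lam (j + 1) x * f (T^[j] x) with hS
  have hSu : Tendsto S atTop (nhds u) := by
    rw [hu]; exact hsum.hasSum.tendsto_sum_nat
  have hSle : ∀ n, S n ≤ u := by
    intro n; rw [hu]
    exact Summable.sum_le_tsum _ (fun j _ => le_of_lt (mul_pos (hLampos _) (hfpos _))) hsum
  have hδpos : 0 < δ := by rw [hδ]; linarith
  have hev : ∀ᶠ n in atTop, δ ≤ t - S n ∧ t - S n ≤ 2 * δ := by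
    have h0 : Tendsto (fun n => u - S n) atTop (nhds (u - u)) :=
      tendsto_const_nhds.sub hSu
    rw [sub_self] at h0
    filter_upwards [h0.eventually_lt_const hδpos] with n hn
    have := hSle n
    constructor <;> [nlinarith; nlinarith]
  have hgS : ∀ n, g n t = (Lam n x)⁻¹ * (t - S n) := fun n => hg n t
  have hev2 : ∀ᶠ n in atTop,
      (Lam n x)⁻¹ * δ ≤ g n t ∧ g n t ≤ 2 * (Lam n x)⁻¹ * δ := by
    filter_upwards [hev] with n hn
    have hinv : (0:ℝ) ≤ (Lam n x)⁻¹ := (inv_pos.2 (hLampos n)).le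
    rw [hgS]
    constructor
    · exact mul_le_mul_of_nonneg_left hn.1 hinv
    · calc (Lam n x)⁻¹ * (t - S n) ≤ (Lam n x)⁻¹ * (2 * δ) :=
            mul_le_mul_of_nonneg_left hn.2 hinv
        _ = 2 * (Lam n x)⁻¹ * δ := by ring
  refine ⟨hev2, fun L hL => ?_⟩
  have hlogT : Tendsto (fun n : ℕ => (1 / (n:ℝ)) * Real.log (t - S n)) atTop (nhds 0) := by
    have hb1 : Tendsto (fun n : ℕ => (1 / (n:ℝ)) * Real.log δ) atTop (nhds 0) := by
      simpa using (tendsto_one_div_atTop_nhds_zero_nat.mul_const (Real.log δ))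
    have hb2 : Tendsto (fun n : ℕ => (1 / (n:ℝ)) * Real.log (2 * δ)) atTop (nhds 0) := by
      simpa using (tendsto_one_div_atTop_nhds_zero_nat.mul_const (Real.log (2 * δ)))
    refine tendsto_of_tendsto_of_tendsto_of_le_of_le' hb1 hb2 ?_ ?_
    · filter_upwards [hev, eventually_ge_atTop 1] with n hn hn1
      have : (0:ℝ) ≤ 1 / (n:ℝ) := by positivity
      exact mul_le_mul_of_nonneg_left (Real.log_le_log hδpos hn.1) this
    · filter_upwards [hev, eventually_ge_atTop 1] with n hn hn1
      have h0 : (0:ℝ) ≤ 1 / (n:ℝ) := by positivity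
      have : t - S n ≤ 2 * δ := hn.2
      exact mul_le_mul_of_nonneg_left
        (Real.log_le_log (by linarith [hn.1]) this) h0
  have heq : ∀ᶠ n : ℕ in atTop, -((1 / (n:ℝ)) * Real.log (Lam n x)) +
      (1 / (n:ℝ)) * Real.log (t - S n) = (1 / (n:ℝ)) * Real.log (g n t) := by
    filter_upwards [hev] with n hn
    have htS : 0 < t - S n := lt_of_lt_of_le hδpos hn.1
    rw [hgS, Real.log_mul (inv_pos.2 (hLampos n)).ne' htS.ne', Real.log_inv]
    ring
  have := (hL.neg.add hlogT)
  rw [add_zero] at this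
  exact this.congr' heq
end

section
/- Assume $f, \lambda : X \to (0,\infty)$ are continuous on a compact metric space $X$, $T : X \to X$ is continuous, $x \in X_u$ (the series $u(x) = \sum_{n\ge0}\lambda^{n+1}(x)f(T^nx)$ converges), and $t < u(x)$. Then there exists $r_0 > 0$ such that for all $y \in B_{r_0}(x) \cap X_u$ we have $u(y) > t$. -/
open Filter Real

theorem stmt_15 {X : Type*} [MetricSpace X] [CompactSpace X]
    (T : X → X) (hT : Continuous T)
    (lam f : X → ℝ) (hlam : Continuous lam) (hf : Continuous f)
    (hlampos : ∀ x, 0 < lam x) (hfpos : ∀ x, 0 < f x)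
    (Lam : ℕ → X → ℝ)
    (hLam : ∀ n y, Lam n y = ∏ j ∈ Finset.range n, lam (T^[j] y))
    (Xu : Set X)
    (hXu : Xu = {y | Summable (fun n : ℕ => Lam (n + 1) y * f (T^[n] y))})
    (x : X) (hx : x ∈ Xu)
    (t : ℝ) (ht : t < ∑' n : ℕ, Lam (n + 1) x * f (T^[n] x)) :
    ∃ r₀ > (0:ℝ), ∀ y ∈ Metric.ball x r₀ ∩ Xu,
      t < ∑' n : ℕ, Lam (n + 1) y * f (T^[n] y) := by
  rw [hXu] at hx
  -- positivity of terms
  have hpos : ∀ (n : ℕ) (y : X), 0 < Lam (n + 1) y * f (T^[n] y) := by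
    intro n y
    have : 0 < Lam (n + 1) y := by
      rw [hLam]
      exact Finset.prod_pos fun j _ => hlampos _
    exact mul_pos this (hfpos _)
  -- partial sums tend to the tsum at x
  have htend := hx.hasSum.tendsto_sum_nat
  have hev : ∀ᶠ n in atTop,
      t < ∑ j ∈ Finset.range n, Lam (j + 1) x * f (T^[j] x) :=
    htend.eventually (eventually_gt_nhds ht)
  obtain ⟨n, hn⟩ := hev.exists
  -- continuity of the partial sum in y
  have hcont : Continuous fun y => ∑ j ∈ Finset.range n, Lam (j + 1) y * f (T^[j] y) := by
    apply continuous_finset_sum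
    intro j _
    have hLc : Continuous fun y => Lam (j + 1) y := by
      have : Continuous fun y => ∏ k ∈ Finset.range (j + 1), lam (T^[k] y) := by
        apply continuous_finset_prod
        intro k _
        exact hlam.comp (hT.iterate k)
      simpa [hLam] using this
    exact hLc.mul (hf.comp (hT.iterate j))
  have hnh : ∀ᶠ y in nhds x, t < ∑ j ∈ Finset.range n, Lam (j + 1) y * f (T^[j] y) :=
    (hcont.continuousAt).eventually (eventually_gt_nhds hn)
  obtain ⟨r₀, hr₀, hball⟩ := Metric.eventually_nhds_iff_ball.mp hnh
  refine ⟨r₀, hr₀, ?_⟩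
  rintro y ⟨hyball, hyXu⟩
  rw [hXu] at hyXu
  calc t < ∑ j ∈ Finset.range n, Lam (j + 1) y * f (T^[j] y) := hball y hyball
    _ ≤ ∑' j : ℕ, Lam (j + 1) y * f (T^[j] y) :=
      Summable.sum_le_tsum _ (fun j _ => (hpos j y).le) hyXu
end
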